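/- Let A be a symmetric monoidal abelian category whose tensor product is additive in each variable, and let U and V be simplicial objects in A. Then the square comparing the Alexander–Whitney maps of U ⊗ V and V ⊗ U via the braidings commutes up to chain homotopy: the composite of AW_{U,V} : C_*(U ⊗ V) → C_*(U) ⊗ C_*(V) with the braiding (with Koszul signs) C_*(U) ⊗ C_*(V) → C_*(V) ⊗ C_*(U) is chain homotopic to the composite of C_*(τ) : C_*(U ⊗ V) → C_*(V ⊗ U) (induced by the levelwise braiding τ) with AW_{V,U} : C_*(V ⊗ U) → C_*(V) ⊗ C_*(U). -/

import Mathlib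

/-! Statement: the square comparing the Alexander–Whitney maps of `U ⊗ V` and
`V ⊗ U` via the braidings commutes up to chain homotopy.  Everything is
expressed componentwise: a map into the tensor product of chain complexes is
recorded by its components into the bidegree-`(p,q)` summands. -/

open CategoryTheory MonoidalCategory
open AlgebraicTopology.AlternatingFaceMapComplex

noncomputable section

variable {A : Type*} [Category A] [Abelian A] [MonoidalCategory A]
  [SymmetricCategory A] [MonoidalPreadditive A]

/-- The object of `A` in simplicial degree `n`. -/
abbrev ob (U : CategoryTheory.SimplicialObject A) (n : ℕ) : A :=
  U.obj (Opposite.op (SimplexCategory.mk n))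

/-- The levelwise tensor product of two simplicial objects. -/
abbrev tensS (U V : CategoryTheory.SimplicialObject A) : CategoryTheory.SimplicialObject A :=
  (U ⊗ V : SimplexCategoryᵒᵖ ⥤ A)

/-- The iterated top face map `d_{p+1} ∘ ⋯ ∘ d_{p+i} : U_{p+i} → U_p`. -/
def dTopIter (U : CategoryTheory.SimplicialObject A) (p : ℕ) :
    (i : ℕ) → (ob U (p + i) ⟶ ob U p)
  | 0 => 𝟙 _
  | (i + 1) => U.δ (Fin.last (p + i + 1)) ≫ dTopIter U p i

/-- The iterated bottom face map `d_0 ∘ ⋯ ∘ d_0 : U_{q+i} → U_q`. -/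
def dBotIter (U : CategoryTheory.SimplicialObject A) (q : ℕ) :
    (i : ℕ) → (ob U (q + i) ⟶ ob U q)
  | 0 => 𝟙 _
  | (i + 1) => U.δ (0 : Fin (q + i + 2)) ≫ dBotIter U q i

/-- The `(p,q)`-component of the Alexander–Whitney map
`AW : C_*(U ⊗ V) → C_*(U) ⊗ C_*(V)` in degree `n = p + q`:
`(d_{p+1} ∘ ⋯ ∘ d_n) ⊗ (d_0 ∘ ⋯ ∘ d_0) : U_n ⊗ V_n → U_p ⊗ V_q`. -/
def AWcomp (U V : CategoryTheory.SimplicialObject A) (n p q : ℕ) (h : p + q = n) :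
    (ob U n ⊗ ob V n) ⟶ (ob U p ⊗ ob V q) :=
  (eqToHom (show ob U n = ob U (p + q) by rw [h]) ≫ dTopIter U p q) ⊗ₘ
    (eqToHom (show ob V n = ob V (q + p) by rw [Nat.add_comm q p, h]) ≫ dBotIter V q p)

/-- The `(p,q)`-component of the composite of `AW_{U,V}` with the braiding
(with Koszul signs) `C_*(U) ⊗ C_*(V) → C_*(V) ⊗ C_*(U)`. -/
def braidAW (U V : CategoryTheory.SimplicialObject A) (n p q : ℕ) (h : p + q = n) :
    (ob U n ⊗ ob V n) ⟶ (ob V p ⊗ ob U q) :=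
  ((-1 : ℤ) ^ (p * q)) • (AWcomp U V n q p (by omega) ≫ (β_ (ob U q) (ob V p)).hom)

/-- The `(p,q)`-component of the composite of the levelwise braiding
`C_*(τ) : C_*(U ⊗ V) → C_*(V ⊗ U)` with `AW_{V,U}`. -/
def tauAW (U V : CategoryTheory.SimplicialObject A) (n p q : ℕ) (h : p + q = n) :
    (ob U n ⊗ ob V n) ⟶ (ob V p ⊗ ob U q) :=
  (β_ (ob U n) (ob V n)).hom ≫ AWcomp V U n p q h

namespace AWB


def runMax (f : ℕ → ℕ) : ℕ → ℕ
  | 0 => f 0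
  | (x+1) => max (runMax f x) (f (x+1))

lemma le_runMax (f : ℕ → ℕ) {y x : ℕ} (h : y ≤ x) : f y ≤ runMax f x := by
  induction x with
  | zero => simp_all [runMax]
  | succ n ih =>
      rcases Nat.lt_or_ge y (n+1) with h'|h'
      · exact le_trans (ih (by omega)) (le_max_left _ _)
      · have : y = n+1 := by omega
        subst this; exact le_max_right _ _

lemma runMax_le {f : ℕ → ℕ} {x c : ℕ} (h : ∀ y, y ≤ x → f y ≤ c) : runMax f x ≤ c := by
  induction x with
  | zero => exact h 0 (le_refl _)
  | succ n ih => exact max_le (ih (fun y hy => h y (by omega))) (h (n+1) (le_refl _))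

lemma runMax_mono (f : ℕ → ℕ) : Monotone (runMax f) := by
  apply monotone_nat_of_le_succ
  intro n; exact le_max_left _ _

lemma runMax_eq (f : ℕ → ℕ) {x : ℕ} (hf : ∀ y, y ≤ x → f y ≤ f x) : runMax f x = f x :=
  le_antisymm (runMax_le hf) (le_runMax f (le_refl _))

lemma runMax_congr {f g : ℕ → ℕ} {x l : ℕ} (hx : x ≤ l) (h : ∀ y, y ≤ l → f y = g y) :
    runMax f x = runMax g x := by
  induction x with
  | zero => simpa [runMax] using h 0 (by omega)
  | succ n ih =>
      show max (runMax f n) (f (n+1)) = max (runMax g n) (g (n+1))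
      rw [ih (by omega), h (n+1) hx]

/-- The morphism `[l] ⟶ [m]` in `SimplexCategory` with "underlying function" `f`
(made monotone & bounded by force). -/
def mor (l m : ℕ) (f : ℕ → ℕ) : SimplexCategory.mk l ⟶ SimplexCategory.mk m :=
  SimplexCategory.mkHom
    ⟨fun x => ⟨min m (runMax f x), Nat.lt_succ_of_le (Nat.min_le_left _ _)⟩,
     fun x y hxy => by
        simp only [Fin.mk_le_mk]
        exact min_le_min (le_refl m) (runMax_mono f hxy)⟩

lemma mor_apply {l m : ℕ} (f : ℕ → ℕ)
    (hmono : ∀ x y, x ≤ y → y ≤ l → f x ≤ f y) (hbdd : ∀ x, x ≤ l → f x ≤ m)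
    (x : Fin (l+1)) :
    (mor l m f).toOrderHom x = ⟨f x, Nat.lt_succ_of_le (hbdd x (by omega))⟩ := by
  have hx : (x : ℕ) ≤ l := by omega
  have h1 : runMax f x = f x := runMax_eq f (fun y hy => hmono y x hy hx)
  apply Fin.ext
  show min m (runMax f x) = f x
  rw [h1]
  exact min_eq_right (hbdd x hx)

lemma mor_congr {l m : ℕ} {f g : ℕ → ℕ} (h : ∀ x, x ≤ l → f x = g x) :
    mor l m f = mor l m g := by
  apply SimplexCategory.Hom.ext
  apply OrderHom.ext
  funext x
  apply Fin.ext
  show min m (runMax f x) = min m (runMax g x)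
  have hx : (x:ℕ) ≤ l := Nat.lt_succ_iff.mp x.isLt
  rw [runMax_congr hx h]

lemma mor_comp {k l m : ℕ} (g f : ℕ → ℕ)
    (hg : ∀ x y, x ≤ y → y ≤ k → g x ≤ g y) (hgb : ∀ x, x ≤ k → g x ≤ l)
    (hf : ∀ x y, x ≤ y → y ≤ l → f x ≤ f y) (hfb : ∀ x, x ≤ l → f x ≤ m) :
    mor k l g ≫ mor l m f = mor k m (fun x => f (g x)) := by
  apply SimplexCategory.Hom.ext
  apply OrderHom.ext
  funext x
  have hcomp : (mor k l g ≫ mor l m f).toOrderHom x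
      = (mor l m f).toOrderHom ((mor k l g).toOrderHom x) := rfl
  rw [hcomp, mor_apply g hg hgb, mor_apply f hf hfb,
    mor_apply (fun x => f (g x)) (fun a b hab hb => hf _ _ (hg a b hab hb) (hgb b hb))
      (fun a ha => hfb _ (hgb a ha))]

/-- the function underlying `δ i`. -/
def dfun (i : ℕ) (x : ℕ) : ℕ := if x < i then x else x + 1

lemma dfun_mono (i : ℕ) : ∀ x y, x ≤ y → dfun i x ≤ dfun i y := by
  intro x y h; unfold dfun; split_ifs <;> omega

lemma δ_eq_mor {l : ℕ} (i : Fin (l+2)) :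
    SimplexCategory.δ i = mor l (l+1) (dfun i) := by
  apply SimplexCategory.Hom.ext
  apply OrderHom.ext
  funext x
  rw [mor_apply (dfun i) (fun a b hab _ => dfun_mono i a b hab)
    (fun a ha => by unfold dfun; split_ifs <;> omega)]
  show i.succAbove x = _
  apply Fin.ext
  rw [Fin.succAbove]
  by_cases h1 : (x.castSucc : ℕ) < (i : ℕ)
  · rw [if_pos (Fin.lt_def.mpr h1)]
    show (x : ℕ) = dfun i x
    unfold dfun
    rw [if_pos (by simpa using h1)]
  · rw [if_neg (by rw [Fin.lt_def]; exact h1)]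
    show (x : ℕ) + 1 = dfun i x
    unfold dfun
    rw [if_neg (by simpa using h1)]

end AWB
namespace AWB
section
set_option linter.unusedSectionVars false
variable {A : Type*} [Category A] [Abelian A] [MonoidalCategory A]
  [SymmetricCategory A] [MonoidalPreadditive A]

lemma tensor_zsmul' {P Q R S : A} (f : P ⟶ Q) (g : R ⟶ S) (c : ℤ) : f ⊗ₘ (c • g) = c • (f ⊗ₘ g) := by
  rw [MonoidalCategory.tensorHom_def, MonoidalCategory.tensorHom_def]
  rw [show Q ◁ (c • g) = (tensorLeft Q).map (c • g) from rfl, Functor.map_zsmul]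
  simp [Preadditive.comp_zsmul]

lemma zsmul_tensor' {P Q R S : A} (f : P ⟶ Q) (g : R ⟶ S) (c : ℤ) : (c • f) ⊗ₘ g = c • (f ⊗ₘ g) := by
  rw [MonoidalCategory.tensorHom_def, MonoidalCategory.tensorHom_def]
  rw [show (c • f) ▷ R = (tensorRight R).map (c • f) from rfl, Functor.map_zsmul]
  simp [Preadditive.zsmul_comp]

variable (U V : CategoryTheory.SimplicialObject A)

/-- basic building block: `(U.map a ⊗ V.map b) ≫ braiding`. -/
def Tm (m p q : ℕ) (fa fb : ℕ → ℕ) : (ob U m ⊗ ob V m) ⟶ (ob V p ⊗ ob U q) :=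
  (U.map (mor q m fa).op ⊗ₘ V.map (mor p m fb).op) ≫ (β_ (ob U q) (ob V p)).hom

lemma Tm_congr {m p q : ℕ} {fa fb fa' fb' : ℕ → ℕ}
    (h1 : ∀ x, x ≤ q → fa x = fa' x) (h2 : ∀ x, x ≤ p → fb x = fb' x) :
    Tm U V m p q fa fb = Tm U V m p q fa' fb' := by
  unfold Tm
  rw [mor_congr h1, mor_congr h2]

lemma Tm_postV (m p q : ℕ) (fa fb : ℕ → ℕ)
    (hfb : ∀ x y, x ≤ y → y ≤ p+1 → fb x ≤ fb y) (hfbb : ∀ x, x ≤ p+1 → fb x ≤ m) :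
    Tm U V m (p+1) q fa fb ≫ (objD V p ⊗ₘ 𝟙 (ob U q)) =
      ∑ j ∈ Finset.range (p+2), ((-1:ℤ)^j) • Tm U V m p q fa (fun x => fb (dfun j x)) :=
  calc Tm U V m (p+1) q fa fb ≫ (objD V p ⊗ₘ 𝟙 (ob U q))
      = ∑ j : Fin (p+2), ((-1:ℤ)^(j:ℕ)) • Tm U V m p q fa (fun x => fb (dfun (j:ℕ) x)) := by
        have hb : (β_ (ob U q) (ob V (p+1))).hom ≫ (objD V p ⊗ₘ 𝟙 (ob U q))
            = (𝟙 (ob U q) ⊗ₘ objD V p) ≫ (β_ (ob U q) (ob V p)).hom := by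
          rw [BraidedCategory.braiding_naturality]
        have hD : V.map (mor (p+1) m fb).op ≫ objD V p
            = ∑ j : Fin (p+2), ((-1:ℤ)^(j:ℕ)) • V.map (mor p m (fun x => fb (dfun (j:ℕ) x))).op := by
          unfold AlgebraicTopology.AlternatingFaceMapComplex.objD
          rw [Preadditive.comp_sum]
          apply Finset.sum_congr rfl
          intro i _
          rw [Preadditive.comp_zsmul]
          congr 1
          show V.map (mor (p+1) m fb).op ≫ V.map (SimplexCategory.δ i).op = _
          rw [← V.map_comp, ← op_comp, δ_eq_mor,
            mor_comp (dfun (i:ℕ)) fb (fun a b hab _ => dfun_mono _ a b hab)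
              (fun a ha => by unfold dfun; split_ifs <;> omega) hfb hfbb]
        unfold Tm
        rw [Category.assoc, hb, ← Category.assoc, tensorHom_comp_tensorHom, Category.comp_id, hD,
          tensor_sum, Preadditive.sum_comp]
        apply Finset.sum_congr rfl
        intro j _
        rw [tensor_zsmul', Preadditive.zsmul_comp]
    _ = ∑ j ∈ Finset.range (p+2), ((-1:ℤ)^j) • Tm U V m p q fa (fun x => fb (dfun j x)) :=
        Fin.sum_univ_eq_sum_range
          (fun j => ((-1:ℤ)^j) • Tm U V m p q fa (fun x => fb (dfun j x))) (p+2)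

lemma Tm_postU (m p q : ℕ) (fa fb : ℕ → ℕ)
    (hfa : ∀ x y, x ≤ y → y ≤ q+1 → fa x ≤ fa y) (hfab : ∀ x, x ≤ q+1 → fa x ≤ m) :
    Tm U V m p (q+1) fa fb ≫ (𝟙 (ob V p) ⊗ₘ objD U q) =
      ∑ j ∈ Finset.range (q+2), ((-1:ℤ)^j) • Tm U V m p q (fun x => fa (dfun j x)) fb :=
  calc Tm U V m p (q+1) fa fb ≫ (𝟙 (ob V p) ⊗ₘ objD U q)
      = ∑ j : Fin (q+2), ((-1:ℤ)^(j:ℕ)) • Tm U V m p q (fun x => fa (dfun (j:ℕ) x)) fb := by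
        have hb : (β_ (ob U (q+1)) (ob V p)).hom ≫ (𝟙 (ob V p) ⊗ₘ objD U q)
            = (objD U q ⊗ₘ 𝟙 (ob V p)) ≫ (β_ (ob U q) (ob V p)).hom := by
          rw [BraidedCategory.braiding_naturality]
        have hD : U.map (mor (q+1) m fa).op ≫ objD U q
            = ∑ j : Fin (q+2), ((-1:ℤ)^(j:ℕ)) • U.map (mor q m (fun x => fa (dfun (j:ℕ) x))).op := by
          unfold AlgebraicTopology.AlternatingFaceMapComplex.objD
          rw [Preadditive.comp_sum]
          apply Finset.sum_congr rfl
          intro i _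
          rw [Preadditive.comp_zsmul]
          congr 1
          show U.map (mor (q+1) m fa).op ≫ U.map (SimplexCategory.δ i).op = _
          rw [← U.map_comp, ← op_comp, δ_eq_mor,
            mor_comp (dfun (i:ℕ)) fa (fun a b hab _ => dfun_mono _ a b hab)
              (fun a ha => by unfold dfun; split_ifs <;> omega) hfa hfab]
        unfold Tm
        rw [Category.assoc, hb, ← Category.assoc, tensorHom_comp_tensorHom, Category.comp_id, hD,
          sum_tensor, Preadditive.sum_comp]
        apply Finset.sum_congr rfl
        intro j _
        rw [zsmul_tensor', Preadditive.zsmul_comp]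
    _ = ∑ j ∈ Finset.range (q+2), ((-1:ℤ)^j) • Tm U V m p q (fun x => fa (dfun j x)) fb :=
        Fin.sum_univ_eq_sum_range
          (fun j => ((-1:ℤ)^j) • Tm U V m p q (fun x => fa (dfun j x)) fb) (q+2)

lemma Tm_preD (n p q : ℕ) (fa fb : ℕ → ℕ)
    (hfa : ∀ x y, x ≤ y → y ≤ q → fa x ≤ fa y) (hfab : ∀ x, x ≤ q → fa x ≤ n)
    (hfb : ∀ x y, x ≤ y → y ≤ p → fb x ≤ fb y) (hfbb : ∀ x, x ≤ p → fb x ≤ n) :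
    objD (tensS U V) n ≫ Tm U V n p q fa fb =
      ∑ k ∈ Finset.range (n+2), ((-1:ℤ)^k) •
        Tm U V (n+1) p q (fun x => dfun k (fa x)) (fun x => dfun k (fb x)) :=
  calc (objD (tensS U V) n ≫ Tm U V n p q fa fb : (ob U (n+1) ⊗ ob V (n+1)) ⟶ (ob V p ⊗ ob U q))
      = ∑ k : Fin (n+2), ((-1:ℤ)^(k:ℕ)) •
          Tm U V (n+1) p q (fun x => dfun (k:ℕ) (fa x)) (fun x => dfun (k:ℕ) (fb x)) := by
        unfold AlgebraicTopology.AlternatingFaceMapComplex.objD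
        erw [Preadditive.sum_comp]
        apply Finset.sum_congr rfl
        intro k _
        erw [Preadditive.zsmul_comp]
        congr 1
        show (U.δ k ⊗ₘ V.δ k) ≫ ((U.map (mor q n fa).op ⊗ₘ V.map (mor p n fb).op)
          ≫ (β_ (ob U q) (ob V p)).hom) = _
        rw [← Category.assoc, tensorHom_comp_tensorHom]
        unfold Tm
        congr 2
        · show U.map (SimplexCategory.δ k).op ≫ U.map (mor q n fa).op = _
          rw [← U.map_comp, ← op_comp, δ_eq_mor,
            mor_comp fa (dfun (k:ℕ)) hfa hfab (fun a b hab _ => dfun_mono _ a b hab)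
              (fun a ha => by unfold dfun; split_ifs <;> omega)]
        · show V.map (SimplexCategory.δ k).op ≫ V.map (mor p n fb).op = _
          rw [← V.map_comp, ← op_comp, δ_eq_mor,
            mor_comp fb (dfun (k:ℕ)) hfb hfbb (fun a b hab _ => dfun_mono _ a b hab)
              (fun a ha => by unfold dfun; split_ifs <;> omega)]
    _ = _ := Fin.sum_univ_eq_sum_range
          (fun k => ((-1:ℤ)^k) • Tm U V (n+1) p q (fun x => dfun k (fa x)) (fun x => dfun k (fb x))) (n+2)

end
end AWB
namespace AWB
section
set_option linter.unusedSectionVars false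
variable {A : Type*} [Category A] [Abelian A] [MonoidalCategory A]
  [SymmetricCategory A] [MonoidalPreadditive A]
variable (U V : CategoryTheory.SimplicialObject A)

lemma mor_id (l : ℕ) : mor l l (fun x => x) = 𝟙 (SimplexCategory.mk l) := by
  apply SimplexCategory.Hom.ext
  apply OrderHom.ext
  funext x
  rw [mor_apply (fun x => x) (fun a b hab _ => hab) (fun a ha => ha)]
  rfl

lemma dTop_eq (p : ℕ) : ∀ i : ℕ, dTopIter U p i = U.map (mor p (p+i) (fun x => x)).op
  | 0 => by
      show 𝟙 _ = _
      simp only [Nat.add_zero]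
      rw [mor_id]
      simp
  | (i+1) => by
      show U.δ (Fin.last (p+i+1)) ≫ dTopIter U p i = _
      rw [dTop_eq p i]
      show U.map (SimplexCategory.δ (Fin.last (p+i+1))).op ≫ _ = _
      rw [← U.map_comp, ← op_comp, δ_eq_mor,
        mor_comp (k := p) (l := p+i) (m := p+i+1)
          (fun x => x) (dfun ((Fin.last (p+i+1) : Fin (p+i+2)):ℕ))
          (fun a b hab _ => hab) (fun a ha => le_trans ha (Nat.le_add_right p i))
          (fun a b hab _ => dfun_mono _ a b hab)
          (fun a ha => by unfold dfun; split_ifs <;> omega)]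
      congr 1
      have h2 : (mor p (p+i+1) fun x => dfun ((Fin.last (p+i+1) : Fin (p+i+2)):ℕ) x)
          = mor p (p+(i+1)) (fun x => x) :=
        mor_congr (fun x hx => by
          simp only [dfun, Fin.val_last]
          rw [if_pos (by omega)])
      rw [h2]

lemma dBot_eq (q : ℕ) : ∀ i : ℕ, dBotIter U q i = U.map (mor q (q+i) (fun x => x + i)).op
  | 0 => by
      show 𝟙 _ = _
      simp only [Nat.add_zero]
      rw [mor_id]
      simp
  | (i+1) => by
      show U.δ (0 : Fin (q+i+2)) ≫ dBotIter U q i = _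
      rw [dBot_eq q i]
      show U.map (SimplexCategory.δ (0 : Fin (q+i+2))).op ≫ _ = _
      rw [← U.map_comp, ← op_comp, δ_eq_mor,
        mor_comp (k := q) (l := q+i) (m := q+i+1)
          (fun x => x + i) (dfun ((0 : Fin (q+i+2)):ℕ))
          (fun a b hab _ => by show a + i ≤ b + i; omega)
          (fun a ha => by show a + i ≤ q + i; omega)
          (fun a b hab _ => dfun_mono _ a b hab)
          (fun a ha => by unfold dfun; split_ifs <;> omega),
        show (mor q (q+i+1) fun x => dfun ((0 : Fin (q+i+2)):ℕ) (x + i))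
          = mor q (q+(i+1)) (fun x => x + (i+1)) from
        mor_congr (fun x hx => by
          simp only [dfun, Fin.val_zero]
          show (if x + i < 0 then x + i else x + i + 1) = x + (i + 1)
          rw [if_neg (by omega)]
          omega)]

lemma eqToHom_mapmor (W : CategoryTheory.SimplicialObject A) {a b l : ℕ} (e : b = a)
    (hh : ob W a = ob W b) (f : ℕ → ℕ) :
    eqToHom hh ≫ W.map (mor l b f).op = W.map (mor l a f).op := by
  subst e
  simp

lemma braidAW_eq (m p q : ℕ) (h : p + q = m) :
    braidAW U V m p q h = ((-1:ℤ)^(p*q)) • Tm U V m p q (fun x => x) (fun x => x + q) := by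
  unfold braidAW AWcomp
  congr 1
  unfold Tm
  congr 2
  · rw [dTop_eq U q p, eqToHom_mapmor U (show q + p = m by omega)]
  · rw [dBot_eq V p q, eqToHom_mapmor V (show p + q = m by omega)]

lemma tauAW_eq (m p q : ℕ) (h : p + q = m) :
    tauAW U V m p q h = Tm U V m p q (fun x => x + p) (fun x => x) := by
  unfold tauAW AWcomp
  rw [dTop_eq V p q, eqToHom_mapmor V (show p + q = m by omega),
    dBot_eq U q p, eqToHom_mapmor U (show q + p = m by omega)]
  unfold Tm
  rw [BraidedCategory.braiding_naturality]

/-- the complement-of-an-interval function: `[q] → [n]`,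
`x ↦ x` for `x ≤ i`, `x ↦ x + p - 1` for `x > i`. -/
def Ai (p i : ℕ) (x : ℕ) : ℕ := if x ≤ i then x else x + p - 1

/-- the functions appearing in the partial-cut sums:
`x ↦ x (x < j), x+1 (j ≤ x < k), x + p (x ≥ k)`. -/
def Ef (p k j : ℕ) (x : ℕ) : ℕ := if x < j then x else if x < k then x + 1 else x + p

/-- The chain homotopy: the Steenrod interval-cut (cup-one) formula. -/
def sfun (n p q : ℕ) : (ob U n ⊗ ob V n) ⟶ (ob V p ⊗ ob U q) :=
  ∑ i ∈ Finset.range q, ((-1:ℤ)^((p+1)*(i+1))) • Tm U V n p q (Ai p i) (fun x => x + i)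

/-- The partial-cut chain maps through which the homotopy telescopes. -/
def Wm (m p q k : ℕ) : (ob U m ⊗ ob V m) ⟶ (ob V p ⊗ ob U q) :=
  ∑ j ∈ Finset.range (k+1), ((-1:ℤ)^(p*k + (k-j))) • Tm U V m p q (Ef p k j) (fun x => x + k)

lemma Wm_zero (m p q : ℕ) : Wm U V m p q 0 = Tm U V m p q (fun x => x + p) (fun x => x) := by
  unfold Wm
  rw [Finset.sum_range_one]
  rw [show ((-1:ℤ)^(p*0 + (0-0))) = 1 by norm_num]
  rw [one_smul]
  exact Tm_congr U V (fun x _ => by unfold Ef; split_ifs <;> omega) (fun x _ => by omega)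

end
end AWB
namespace AWB
section
set_option linter.unusedSectionVars false
set_option maxHeartbeats 1000000
variable {A : Type*} [Category A] [Abelian A] [MonoidalCategory A]
  [SymmetricCategory A] [MonoidalPreadditive A]
variable (U V : CategoryTheory.SimplicialObject A)

lemma sgn_eq {a b : ℕ} (h : a % 2 = b % 2) : ((-1:ℤ))^a = (-1:ℤ)^b := by
  rw [← Nat.div_add_mod a 2, ← Nat.div_add_mod b 2, pow_add, pow_add, pow_mul, pow_mul]
  norm_num [h]

lemma sgn_neg {a b : ℕ} (h : (a + b) % 2 = 1) : ((-1:ℤ))^a = -(-1:ℤ)^b := by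
  have h1 : ((-1:ℤ))^(a+b) = -1 := Odd.neg_one_pow (Nat.odd_iff.mpr h)
  have hb : ((-1:ℤ))^b * (-1)^b = 1 := by
    rw [← pow_add]
    exact Even.neg_one_pow ⟨b, rfl⟩
  calc ((-1:ℤ))^a = (-1)^a * ((-1)^b * (-1)^b) := by rw [hb, mul_one]
    _ = ((-1)^(a+b)) * (-1)^b := by rw [pow_add]; ring
    _ = -(-1)^b := by rw [h1]; ring

lemma sum_split {M : Type*} [AddCommMonoid M] (K N : ℕ) (f : ℕ → M) :
    ∑ k ∈ Finset.range (K+N), f k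
      = (∑ k ∈ Finset.range K, f k) + ∑ t ∈ Finset.range N, f (K+t) := by
  induction N with
  | zero => simp
  | succ n ih =>
      rw [show K + (n+1) = (K+n)+1 from rfl, Finset.sum_range_succ, ih,
        Finset.sum_range_succ, add_assoc]

lemma assemble {X : Type*} [AddCommGroup X] (a b c m1 m3 r2 r3 t1 t2 : X)
    (hz1 : m1 + m3 = 0) (hz2 : r2 + r3 = 0) (hz3 : t1 + t2 = 0) :
    a + (m1 + t1) + (b + (t2 + r2)) + (c + (m3 + r3)) = (c + a) - -b := by
  rw [add_eq_zero_iff_eq_neg] at hz1 hz2 hz3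
  rw [hz1, hz2, hz3]
  abel

lemma slice (m p q i : ℕ) (hm : p + q = m) (hi : i < q) :
    (∑ j ∈ Finset.range (p+2), ((-1:ℤ)^((p+2)*(i+1)+j)) •
        Tm U V m p q (Ai (p+1) i) (fun x => dfun j x + i))
    + (∑ j ∈ Finset.range (q+2), ((-1:ℤ)^(p+(p+1)*(i+1)+j)) •
        Tm U V m p q (fun x => Ai p i (dfun j x)) (fun x => x + i))
    + (∑ k ∈ Finset.range (m+1), ((-1:ℤ)^((p+1)*(i+1)+k)) •
        Tm U V m p q (fun x => dfun k (Ai p i x)) (fun x => dfun k (x + i)))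
    = Wm U V m p q (i+1) - Wm U V m p q i := by
  set F1 : ℕ → ((ob U m ⊗ ob V m) ⟶ (ob V p ⊗ ob U q)) := fun j =>
    ((-1:ℤ)^((p+2)*(i+1)+j)) • Tm U V m p q (Ai (p+1) i) (fun x => dfun j x + i) with hF1
  set F2 : ℕ → ((ob U m ⊗ ob V m) ⟶ (ob V p ⊗ ob U q)) := fun j =>
    ((-1:ℤ)^(p+(p+1)*(i+1)+j)) • Tm U V m p q (fun x => Ai p i (dfun j x)) (fun x => x + i) with hF2
  set F3 : ℕ → ((ob U m ⊗ ob V m) ⟶ (ob V p ⊗ ob U q)) := fun k =>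
    ((-1:ℤ)^((p+1)*(i+1)+k)) • Tm U V m p q (fun x => dfun k (Ai p i x)) (fun x => dfun k (x + i)) with hF3
  have z1 : (∑ t ∈ Finset.range p, F1 (1+t)) + (∑ t ∈ Finset.range p, F3 (i+1+t)) = 0 := by
    rw [← Finset.sum_add_distrib]
    apply Finset.sum_eq_zero
    intro t ht
    have ht' : t < p := Finset.mem_range.mp ht
    rw [hF1, hF3]
    show ((-1:ℤ)^((p+2)*(i+1)+(1+t))) • Tm U V m p q (Ai (p+1) i) (fun x => dfun (1+t) x + i)
      + ((-1:ℤ)^((p+1)*(i+1)+(i+1+t))) •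
          Tm U V m p q (fun x => dfun (i+1+t) (Ai p i x)) (fun x => dfun (i+1+t) (x + i)) = 0
    rw [show Tm U V m p q (fun x => dfun (i+1+t) (Ai p i x)) (fun x => dfun (i+1+t) (x + i))
        = Tm U V m p q (Ai (p+1) i) (fun x => dfun (1+t) x + i) from
      Tm_congr U V (fun x hx => by simp only [dfun, Ai]; split_ifs <;> omega)
        (fun x hx => by simp only [dfun]; split_ifs <;> omega),
      show ((-1:ℤ)^((p+1)*(i+1)+(i+1+t))) = -((-1:ℤ)^((p+2)*(i+1)+(1+t))) from sgn_neg (by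
        have h1 : (p+1)*(i+1) = p*(i+1)+(i+1) := by ring
        have h2 : (p+2)*(i+1) = p*(i+1)+2*(i+1) := by ring
        rw [h1, h2]
        generalize p*(i+1) = P
        omega),
      neg_smul]
    abel
  have z2 : (∑ t ∈ Finset.range (q-i), F2 (i+1+(1+t)))
      + (∑ t ∈ Finset.range (q-i), F3 (i+1+(p+t))) = 0 := by
    rw [← Finset.sum_add_distrib]
    apply Finset.sum_eq_zero
    intro t ht
    have ht' : t < q - i := Finset.mem_range.mp ht
    rw [hF2, hF3]
    show ((-1:ℤ)^(p+(p+1)*(i+1)+(i+1+(1+t)))) •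
        Tm U V m p q (fun x => Ai p i (dfun (i+1+(1+t)) x)) (fun x => x + i)
      + ((-1:ℤ)^((p+1)*(i+1)+(i+1+(p+t)))) •
          Tm U V m p q (fun x => dfun (i+1+(p+t)) (Ai p i x)) (fun x => dfun (i+1+(p+t)) (x + i)) = 0
    rw [show Tm U V m p q (fun x => dfun (i+1+(p+t)) (Ai p i x)) (fun x => dfun (i+1+(p+t)) (x + i))
        = Tm U V m p q (fun x => Ai p i (dfun (i+1+(1+t)) x)) (fun x => x + i) from
      Tm_congr U V (fun x hx => by simp only [dfun, Ai]; split_ifs <;> omega)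
        (fun x hx => by simp only [dfun]; split_ifs <;> omega),
      show ((-1:ℤ)^((p+1)*(i+1)+(i+1+(p+t)))) = -((-1:ℤ)^(p+(p+1)*(i+1)+(i+1+(1+t)))) from
        sgn_neg (by
          have h1 : (p+1)*(i+1) = p*(i+1)+(i+1) := by ring
          rw [h1]
          generalize p*(i+1) = P
          omega),
      neg_smul]
    abel
  have z3 : F1 (1+(p+0)) + F2 (i+1+0) = 0 := by
    rw [hF1, hF2]
    show ((-1:ℤ)^((p+2)*(i+1)+(1+(p+0)))) • Tm U V m p q (Ai (p+1) i) (fun x => dfun (1+(p+0)) x + i)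
      + ((-1:ℤ)^(p+(p+1)*(i+1)+(i+1+0))) •
          Tm U V m p q (fun x => Ai p i (dfun (i+1+0) x)) (fun x => x + i) = 0
    rw [show Tm U V m p q (fun x => Ai p i (dfun (i+1+0) x)) (fun x => x + i)
        = Tm U V m p q (Ai (p+1) i) (fun x => dfun (1+(p+0)) x + i) from
      Tm_congr U V (fun x hx => by simp only [dfun, Ai]; split_ifs <;> omega)
        (fun x hx => by simp only [dfun]; split_ifs <;> omega),
      show ((-1:ℤ)^(p+(p+1)*(i+1)+(i+1+0))) = -((-1:ℤ)^((p+2)*(i+1)+(1+(p+0)))) from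
        sgn_neg (by
          have h1 : (p+1)*(i+1) = p*(i+1)+(i+1) := by ring
          have h2 : (p+2)*(i+1) = p*(i+1)+2*(i+1) := by ring
          rw [h1, h2]
          generalize p*(i+1) = P
          omega),
      neg_smul]
    abel
  have w1 : Wm U V m p q (i+1) = (∑ k ∈ Finset.range (i+1), F3 k) + F1 0 := by
    unfold Wm
    rw [Finset.sum_range_succ]
    congr 1
    · apply Finset.sum_congr rfl
      intro k hk
      have hk' : k ≤ i := Nat.lt_succ_iff.mp (Finset.mem_range.mp hk)
      rw [hF3]
      show ((-1:ℤ)^(p*(i+1)+((i+1)-k))) • Tm U V m p q (Ef p (i+1) k) (fun x => x + (i+1))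
        = ((-1:ℤ)^((p+1)*(i+1)+k)) •
            Tm U V m p q (fun x => dfun k (Ai p i x)) (fun x => dfun k (x + i))
      rw [show Tm U V m p q (fun x => dfun k (Ai p i x)) (fun x => dfun k (x + i))
          = Tm U V m p q (Ef p (i+1) k) (fun x => x + (i+1)) from
        Tm_congr U V (fun x hx => by simp only [dfun, Ai, Ef]; split_ifs <;> omega)
          (fun x hx => by simp only [dfun]; split_ifs <;> omega),
        show ((-1:ℤ)^((p+1)*(i+1)+k)) = ((-1:ℤ)^(p*(i+1)+((i+1)-k))) from sgn_eq (by
          have h1 : (p+1)*(i+1) = p*(i+1)+(i+1) := by ring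
          rw [h1]
          generalize p*(i+1) = P
          omega)]
    · rw [hF1]
      show ((-1:ℤ)^(p*(i+1)+((i+1)-(i+1)))) • Tm U V m p q (Ef p (i+1) (i+1)) (fun x => x + (i+1))
        = ((-1:ℤ)^((p+2)*(i+1)+0)) • Tm U V m p q (Ai (p+1) i) (fun x => dfun 0 x + i)
      rw [show Tm U V m p q (Ai (p+1) i) (fun x => dfun 0 x + i)
          = Tm U V m p q (Ef p (i+1) (i+1)) (fun x => x + (i+1)) from
        Tm_congr U V (fun x hx => by simp only [dfun, Ai, Ef]; split_ifs <;> omega)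
          (fun x hx => by simp only [dfun]; split_ifs <;> omega),
        show ((-1:ℤ)^((p+2)*(i+1)+0)) = ((-1:ℤ)^(p*(i+1)+((i+1)-(i+1)))) from sgn_eq (by
          have h2 : (p+2)*(i+1) = p*(i+1)+2*(i+1) := by ring
          rw [h2]
          generalize p*(i+1) = P
          omega)]
  have w2 : Wm U V m p q i = - ∑ j ∈ Finset.range (i+1), F2 j := by
    unfold Wm
    rw [← Finset.sum_neg_distrib]
    apply Finset.sum_congr rfl
    intro j hj
    have hj' : j ≤ i := Nat.lt_succ_iff.mp (Finset.mem_range.mp hj)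
    rw [hF2]
    show ((-1:ℤ)^(p*i+(i-j))) • Tm U V m p q (Ef p i j) (fun x => x + i)
      = -(((-1:ℤ)^(p+(p+1)*(i+1)+j)) •
          Tm U V m p q (fun x => Ai p i (dfun j x)) (fun x => x + i))
    rw [show Tm U V m p q (fun x => Ai p i (dfun j x)) (fun x => x + i)
        = Tm U V m p q (Ef p i j) (fun x => x + i) from
      Tm_congr U V (fun x hx => by simp only [dfun, Ai, Ef]; split_ifs <;> omega)
        (fun x hx => by omega),
      show ((-1:ℤ)^(p*i+(i-j))) = -((-1:ℤ)^(p+(p+1)*(i+1)+j)) from sgn_neg (by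
        have h1 : (p+1)*(i+1) = p*i + p + i + 1 := by ring
        rw [h1]
        generalize p*i = P
        omega),
      neg_smul]
  rw [show p+2 = 1+(p+1) from by omega, sum_split 1 (p+1) F1,
    sum_split p 1 (fun t => F1 (1+t)), Finset.sum_range_one, Finset.sum_range_one,
    show q+2 = (i+1)+(1+(q-i)) from by omega, sum_split (i+1) (1+(q-i)) F2,
    sum_split 1 (q-i) (fun t => F2 (i+1+t)), Finset.sum_range_one,
    show m+1 = (i+1)+(p+(q-i)) from by omega, sum_split (i+1) (p+(q-i)) F3,
    sum_split p (q-i) (fun t => F3 (i+1+t)),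
    w1, w2]
  exact assemble _ _ _ _ _ _ _ _ _ z1 z2 z3

end
end AWB
namespace AWB
section
set_option linter.unusedSectionVars false
set_option maxHeartbeats 1000000
variable {A : Type*} [Category A] [Abelian A] [MonoidalCategory A]
  [SymmetricCategory A] [MonoidalPreadditive A]
variable (U V : CategoryTheory.SimplicialObject A)

lemma lastsum (m p q : ℕ) (hm : p + q = m) :
    ∑ j ∈ Finset.range (q+2), ((-1:ℤ)^(p+(p+1)*(q+1)+j)) •
        Tm U V m p q (fun x => Ai p q (dfun j x)) (fun x => x + q)
    = ((-1:ℤ)^(p*q)) • Tm U V m p q (fun x => x) (fun x => x + q) - Wm U V m p q q := by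
  rw [show q+2 = (q+1)+1 from rfl, Finset.sum_range_succ]
  have h1 : ∑ j ∈ Finset.range (q+1), ((-1:ℤ)^(p+(p+1)*(q+1)+j)) •
      Tm U V m p q (fun x => Ai p q (dfun j x)) (fun x => x + q) = - Wm U V m p q q := by
    unfold Wm
    rw [← Finset.sum_neg_distrib]
    apply Finset.sum_congr rfl
    intro j hj
    have hj' : j ≤ q := Nat.lt_succ_iff.mp (Finset.mem_range.mp hj)
    rw [show Tm U V m p q (fun x => Ai p q (dfun j x)) (fun x => x + q)
        = Tm U V m p q (Ef p q j) (fun x => x + q) from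
      Tm_congr U V (fun x hx => by simp only [dfun, Ai, Ef]; split_ifs <;> omega)
        (fun x hx => by omega),
      show ((-1:ℤ)^(p+(p+1)*(q+1)+j)) = -((-1:ℤ)^(p*q+(q-j))) from sgn_neg (by
        have h1 : (p+1)*(q+1) = p*q + p + q + 1 := by ring
        rw [h1]
        generalize p*q = P
        omega),
      neg_smul]
  have h2 : ((-1:ℤ)^(p+(p+1)*(q+1)+(q+1))) •
      Tm U V m p q (fun x => Ai p q (dfun (q+1) x)) (fun x => x + q)
      = ((-1:ℤ)^(p*q)) • Tm U V m p q (fun x => x) (fun x => x + q) := by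
    rw [show Tm U V m p q (fun x => Ai p q (dfun (q+1) x)) (fun x => x + q)
        = Tm U V m p q (fun x => x) (fun x => x + q) from
      Tm_congr U V (fun x hx => by simp only [dfun, Ai]; split_ifs <;> omega)
        (fun x hx => by omega),
      show ((-1:ℤ)^(p+(p+1)*(q+1)+(q+1))) = ((-1:ℤ)^(p*q)) from sgn_eq (by
        have h1 : (p+1)*(q+1) = p*q + p + q + 1 := by ring
        rw [h1]
        generalize p*q = P
        omega)]
  rw [h1, h2]
  abel

lemma main2 (n p q : ℕ) (h : p + q = n + 1) :
    braidAW U V (n+1) p q h = tauAW U V (n+1) p q h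
      + (sfun U V (n+1) (p+1) q ≫ (objD V p ⊗ₘ 𝟙 (ob U q)))
      + ((-1:ℤ)^p) • (sfun U V (n+1) p (q+1) ≫ (𝟙 (ob V p) ⊗ₘ objD U q))
      + ((objD (tensS U V) n ≫ sfun U V n p q :
            (ob U (n+1) ⊗ ob V (n+1)) ⟶ (ob V p ⊗ ob U q))) := by
  have hE1 : sfun U V (n+1) (p+1) q ≫ (objD V p ⊗ₘ 𝟙 (ob U q))
      = ∑ i ∈ Finset.range q, ∑ j ∈ Finset.range (p+2),
          ((-1:ℤ)^((p+2)*(i+1)+j)) • Tm U V (n+1) p q (Ai (p+1) i) (fun x => dfun j x + i) := by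
    unfold sfun
    rw [Preadditive.sum_comp]
    apply Finset.sum_congr rfl
    intro i hi
    have hi' : i < q := Finset.mem_range.mp hi
    rw [Preadditive.zsmul_comp,
      Tm_postV U V (n+1) p q (Ai (p+1) i) (fun x => x + i)
        (fun a b hab _ => by show a + i ≤ b + i; omega)
        (fun a ha => by show a + i ≤ n + 1; omega),
      Finset.smul_sum]
    apply Finset.sum_congr rfl
    intro j hj
    rw [smul_smul, ← pow_add]
  have hE2 : ((-1:ℤ)^p) • (sfun U V (n+1) p (q+1) ≫ (𝟙 (ob V p) ⊗ₘ objD U q))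
      = ∑ i ∈ Finset.range (q+1), ∑ j ∈ Finset.range (q+2),
          ((-1:ℤ)^(p+(p+1)*(i+1)+j)) •
            Tm U V (n+1) p q (fun x => Ai p i (dfun j x)) (fun x => x + i) := by
    unfold sfun
    rw [Preadditive.sum_comp, Finset.smul_sum]
    apply Finset.sum_congr rfl
    intro i hi
    have hi' : i < q + 1 := Finset.mem_range.mp hi
    rw [Preadditive.zsmul_comp,
      Tm_postU U V (n+1) p q (Ai p i) (fun x => x + i)
        (fun a b hab _ => by simp only [Ai]; split_ifs <;> omega)
        (fun a ha => by simp only [Ai]; split_ifs <;> omega),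
      smul_smul, ← pow_add, Finset.smul_sum]
    apply Finset.sum_congr rfl
    intro j hj
    rw [smul_smul, ← pow_add]
  have hE3 : objD (tensS U V) n ≫ sfun U V n p q
      = ∑ i ∈ Finset.range q, ∑ k ∈ Finset.range (n+2),
          ((-1:ℤ)^((p+1)*(i+1)+k)) •
            Tm U V (n+1) p q (fun x => dfun k (Ai p i x)) (fun x => dfun k (x + i)) := by
    unfold sfun
    erw [Preadditive.comp_sum]
    apply Finset.sum_congr rfl
    intro i hi
    have hi' : i < q := Finset.mem_range.mp hi
    erw [Preadditive.comp_zsmul,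
      Tm_preD U V n p q (Ai p i) (fun x => x + i)
        (fun a b hab _ => by simp only [Ai]; split_ifs <;> omega)
        (fun a ha => by simp only [Ai]; split_ifs <;> omega)
        (fun a b hab _ => by show a + i ≤ b + i; omega)
        (fun a ha => by show a + i ≤ n; omega)]
    refine (Finset.smul_sum (r := ((-1:ℤ)^((p+1)*(i+1))))).trans ?_
    apply Finset.sum_congr rfl
    intro k hk
    exact (smul_smul _ _ _).trans (congrArg (· • _) (pow_add _ _ _).symm)
  rw [braidAW_eq, tauAW_eq, hE1, hE2]
  erw [hE3]
  rw [Finset.sum_range_succ, ← Wm_zero U V (n+1) p q]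
  have key : ∑ i ∈ Finset.range q,
      ((∑ j ∈ Finset.range (p+2), ((-1:ℤ)^((p+2)*(i+1)+j)) •
          Tm U V (n+1) p q (Ai (p+1) i) (fun x => dfun j x + i))
        + (∑ j ∈ Finset.range (q+2), ((-1:ℤ)^(p+(p+1)*(i+1)+j)) •
          Tm U V (n+1) p q (fun x => Ai p i (dfun j x)) (fun x => x + i))
        + (∑ k ∈ Finset.range (n+2), ((-1:ℤ)^((p+1)*(i+1)+k)) •
          Tm U V (n+1) p q (fun x => dfun k (Ai p i x)) (fun x => dfun k (x + i))))
      = Wm U V (n+1) p q q - Wm U V (n+1) p q 0 := by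
    have step : ∀ i ∈ Finset.range q,
        ((∑ j ∈ Finset.range (p+2), ((-1:ℤ)^((p+2)*(i+1)+j)) •
            Tm U V (n+1) p q (Ai (p+1) i) (fun x => dfun j x + i))
          + (∑ j ∈ Finset.range (q+2), ((-1:ℤ)^(p+(p+1)*(i+1)+j)) •
            Tm U V (n+1) p q (fun x => Ai p i (dfun j x)) (fun x => x + i))
          + (∑ k ∈ Finset.range (n+2), ((-1:ℤ)^((p+1)*(i+1)+k)) •
            Tm U V (n+1) p q (fun x => dfun k (Ai p i x)) (fun x => dfun k (x + i))))
        = Wm U V (n+1) p q (i+1) - Wm U V (n+1) p q i :=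
      fun i hi => slice U V (n+1) p q i h (Finset.mem_range.mp hi)
    rw [Finset.sum_congr rfl step]
    exact Finset.sum_range_sub (fun k => Wm U V (n+1) p q k) q
  have hl := lastsum U V (n+1) p q h
  calc ((-1:ℤ)^(p*q)) • Tm U V (n+1) p q (fun x => x) (fun x => x + q)
      = Wm U V (n+1) p q 0
        + (Wm U V (n+1) p q q - Wm U V (n+1) p q 0)
        + (((-1:ℤ)^(p*q)) • Tm U V (n+1) p q (fun x => x) (fun x => x + q)
            - Wm U V (n+1) p q q) := by abel
    _ = _ := by
        rw [← key, ← hl, Finset.sum_add_distrib, Finset.sum_add_distrib]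
        abel

end
end AWB
namespace AWB
section
set_option linter.unusedSectionVars false
set_option maxHeartbeats 1000000
variable {A : Type*} [Category A] [Abelian A] [MonoidalCategory A]
  [SymmetricCategory A] [MonoidalPreadditive A]
variable (U V : CategoryTheory.SimplicialObject A)

lemma main1 (p q : ℕ) (h : p + q = 0) :
    braidAW U V 0 p q h = tauAW U V 0 p q h
      + (sfun U V 0 (p+1) q ≫ (objD V p ⊗ₘ 𝟙 (ob U q)))
      + ((-1:ℤ)^p) • (sfun U V 0 p (q+1) ≫ (𝟙 (ob V p) ⊗ₘ objD U q)) := by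
  obtain rfl : p = 0 := by omega
  obtain rfl : q = 0 := by omega
  have h1 : sfun U V 0 (0+1) 0 = 0 := by
    unfold sfun
    exact Finset.sum_range_zero _
  have h2 : ((-1:ℤ)^0) • (sfun U V 0 0 (0+1) ≫ (𝟙 (ob V 0) ⊗ₘ objD U 0)) = 0 := by
    unfold sfun
    rw [Finset.sum_range_one, Preadditive.zsmul_comp,
      Tm_postU U V 0 0 0 (Ai 0 0) (fun x => x + 0)
        (fun a b hab _ => by simp only [Ai]; split_ifs <;> omega)
        (fun a ha => by simp only [Ai]; split_ifs <;> omega)]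
    rw [show (0+2 : ℕ) = 1+1 from rfl, Finset.sum_range_succ, Finset.sum_range_one]
    rw [show Tm U V 0 0 0 (fun x => Ai 0 0 (dfun 1 x)) (fun x => x + 0)
        = Tm U V 0 0 0 (fun x => Ai 0 0 (dfun 0 x)) (fun x => x + 0) from
      Tm_congr U V (fun x hx => by simp only [dfun, Ai]; split_ifs <;> omega)
        (fun x hx => rfl)]
    simp
  rw [h1, Limits.zero_comp, h2, braidAW_eq, tauAW_eq]
  rw [show Tm U V 0 0 0 (fun x => x) (fun x => x + 0)
      = Tm U V 0 0 0 (fun x => x + 0) (fun x => x) from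
    Tm_congr U V (fun x hx => by omega) (fun x hx => by omega)]
  simp

end
end AWB

/-- **The Alexander–Whitney map commutes with the braiding up to chain
homotopy**: for simplicial objects `U`, `V` in a symmetric monoidal abelian
category whose tensor product is additive in each variable, the composite of
`AW_{U,V}` with the braiding of chain complexes is chain homotopic to the
composite of `C_*(τ)` with `AW_{V,U}`.  The homotopy `s` and all maps into the
tensor product `C_*(V) ⊗ C_*(U)` of chain complexes are recorded by their
components into the bidegree summands `V_p ⊗ U_q`, and the differential of
that tensor product carries the Koszul sign `(-1)^p` on `id ⊗ d`. -/
theorem alexander_whitney_braiding_homotopy (U V : CategoryTheory.SimplicialObject A) :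
    ∃ s : (n p q : ℕ) → p + q = n + 1 → ((ob U n ⊗ ob V n) ⟶ (ob V p ⊗ ob U q)),
      (∀ (p q : ℕ) (h : p + q = 0),
        braidAW U V 0 p q h = tauAW U V 0 p q h +
          (s 0 (p + 1) q (by omega) ≫ (objD V p ⊗ₘ 𝟙 (ob U q))) +
          ((-1 : ℤ) ^ p) • (s 0 p (q + 1) (by omega) ≫ (𝟙 (ob V p) ⊗ₘ objD U q))) ∧
      (∀ (n p q : ℕ) (h : p + q = n + 1),
        braidAW U V (n + 1) p q h = tauAW U V (n + 1) p q h +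
          (s (n + 1) (p + 1) q (by omega) ≫ (objD V p ⊗ₘ 𝟙 (ob U q))) +
          ((-1 : ℤ) ^ p) • (s (n + 1) p (q + 1) (by omega) ≫ (𝟙 (ob V p) ⊗ₘ objD U q)) +
          ((objD (tensS U V) n ≫ s n p q h :
            (ob U (n + 1) ⊗ ob V (n + 1)) ⟶ (ob V p ⊗ ob U q)))) := by
  refine ⟨fun n p q _ => AWB.sfun U V n p q, ?_, ?_⟩
  · intro p q h
    exact AWB.main1 U V p q h
  · intro n p q h
    exact AWB.main2 U V n p q h

end
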